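/- Let A ∈ ℝ^{m×n}, c, u ∈ ℝ^n with u ≥ 0, and b, b̄ ∈ ℝ^m. If both LP(A,b,c,u) and LP(A,b̄,c,u) are feasible, then |Φ(A,b,c,u) − Φ(A,b̄,c,u)| ≤ κ(X_A)·‖c‖₁·‖b − b̄‖₁. -/

import Mathlib

open BigOperators Finset

noncomputable section

open Classical

/-- A nonzero `g ∈ W` is an elementary vector of `W` if no nonzero `h ∈ W`
has strictly smaller support. -/
def IsElementaryVec {ι : Type*} (W : Submodule ℝ (ι → ℝ)) (g : ι → ℝ) : Prop :=
  g ∈ W ∧ g ≠ 0 ∧ ∀ h : ι → ℝ, h ∈ W → h ≠ 0 → ¬ ({i | h i ≠ 0} ⊂ {i | g i ≠ 0})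

/-- The circuit imbalance measure `κ(W)`: the maximum of `|g j / g i|` over elementary
vectors `g` of `W` and `i, j ∈ supp(g)`, with `κ(W) := 1` for the trivial subspaces. -/
noncomputable def kappaSub {ι : Type*} (W : Submodule ℝ (ι → ℝ)) : ℝ :=
  if W = ⊥ ∨ W = ⊤ then 1
  else sSup {t : ℝ | ∃ g : ι → ℝ, IsElementaryVec W g ∧
    ∃ i j : ι, g i ≠ 0 ∧ g j ≠ 0 ∧ t = |g j / g i|}

/-- `y` conforms to `x` if `x i * y i > 0` whenever `y i ≠ 0`. -/
def Conforms {ι : Type*} (x y : ι → ℝ) : Prop :=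
  ∀ i, y i ≠ 0 → x i * y i > 0

/-- The extended subspace `X_A := ker (A | −I_m) ⊆ ℝ^{n+m}`. -/
noncomputable def XA {m n : ℕ} (A : Matrix (Fin m) (Fin n) ℝ) :
    Submodule ℝ (Fin n ⊕ Fin m → ℝ) :=
  LinearMap.ker (Matrix.fromCols A (-1)).mulVecLin

/-- The optimal value `Φ(A,b,c,u)` of `LP(A,b,c,u)`:
`min ⟨c,x⟩  s.t.  Ax = b, 0 ≤ x ≤ u`. -/
noncomputable def PhiLP {m : ℕ} {ι : Type*} [Fintype ι] (A : Matrix (Fin m) ι ℝ)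
    (b : Fin m → ℝ) (c u : ι → ℝ) : ℝ :=
  sInf {v : ℝ | ∃ x : ι → ℝ, A.mulVec x = b ∧ 0 ≤ x ∧ x ≤ u ∧ v = ∑ i, c i * x i}

/-- `θ(x,π,σ) = Σ_{i : c_i − A_i^⊤π > σ} x_i + Σ_{i : c_i − A_i^⊤π < −σ} (u_i − x_i)`. -/
noncomputable def thetaLP {m n : ℕ} (A : Matrix (Fin m) (Fin n) ℝ) (c u x : Fin n → ℝ)
    (π : Fin m → ℝ) (σ : ℝ) : ℝ :=
  (∑ i ∈ Finset.univ.filter (fun i => c i - ∑ j, A j i * π j > σ), x i) +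
    ∑ i ∈ Finset.univ.filter (fun i => c i - ∑ j, A j i * π j < -σ), (u i - x i)

set_option linter.unusedSectionVars false
set_option linter.unusedVariables false
set_option maxHeartbeats 1000000

section Aux
variable {ι : Type*} [Fintype ι]

/-- support as a finset -/
def suppF (v : ι → ℝ) : Finset ι := Finset.univ.filter (fun i => v i ≠ 0)

lemma mem_suppF {v : ι → ℝ} {i : ι} : i ∈ suppF v ↔ v i ≠ 0 := by
  simp [suppF]

lemma coe_suppF (v : ι → ℝ) : (suppF v : Set ι) = {i | v i ≠ 0} := by
  ext i; simp [suppF]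

lemma conforms_self (v : ι → ℝ) : Conforms v v := fun i h => mul_self_pos.mpr h

lemma conforms_trans {a b c : ι → ℝ} (h1 : Conforms a b) (h2 : Conforms b c) :
    Conforms a c := by
  intro i hc
  have hb : b i ≠ 0 := by
    intro h0
    have := h2 i hc
    rw [h0] at this; simp at this
  have p1 := h1 i hb
  have p2 := h2 i hc
  nlinarith [mul_pos p1 p2, mul_self_pos.mpr hb]

lemma suppF_nonempty {v : ι → ℝ} (hv : v ≠ 0) : (suppF v).Nonempty := by
  rcases Function.ne_iff.1 hv with ⟨i, hi⟩
  exact ⟨i, mem_suppF.2 hi⟩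

lemma eq_zero_of_suppF_empty {v : ι → ℝ} (h : suppF v = ∅) : v = 0 := by
  funext i
  by_contra hi
  have : i ∈ suppF v := mem_suppF.2 hi
  simp [h] at this

end Aux

section Aux2
variable {ι : Type*} [Fintype ι] {W : Submodule ℝ (ι → ℝ)}

lemma suppF_neg (f : ι → ℝ) : suppF (-f) = suppF f := by
  ext i; simp [mem_suppF]

/-- Any nonzero `v ∈ W` dominates an elementary vector conformal to it. -/
lemma exists_elementary_conforms {v : ι → ℝ} (hvW : v ∈ W) (hv : v ≠ 0) :
    ∃ g : ι → ℝ, IsElementaryVec W g ∧ Conforms v g ∧ suppF g ⊆ suppF v := by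
  set P : (ι → ℝ) → Prop :=
    fun g => g ∈ W ∧ g ≠ 0 ∧ Conforms v g ∧ suppF g ⊆ suppF v with hP
  have hPv : P v := ⟨hvW, hv, conforms_self v, subset_rfl⟩
  have hex : ∃ k : ℕ, ∃ g, P g ∧ (suppF g).card = k := ⟨_, v, hPv, rfl⟩
  obtain ⟨g, hg, hcard⟩ := Nat.find_spec hex
  refine ⟨g, ⟨hg.1, hg.2.1, ?_⟩, hg.2.2.1, hg.2.2.2⟩
  -- main claim used after a sign normalization
  have key : ∀ f : ι → ℝ, f ∈ W → f ≠ 0 → suppF f ⊂ suppF g →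
      (∃ i, 0 < f i * g i) → False := by
    rintro f hfW hf hssF ⟨i₀, hi₀⟩
    have hfg : ∀ i, f i ≠ 0 → g i ≠ 0 := fun i hi =>
      mem_suppF.1 (hssF.1 (mem_suppF.2 hi))
    set T : Finset ι := Finset.univ.filter (fun i => 0 < f i * g i) with hT
    have hTne : T.Nonempty := ⟨i₀, by simp [hT, hi₀]⟩
    obtain ⟨istar, histar, hmin⟩ := T.exists_min_image (fun i => g i / f i) hTne
    set t := g istar / f istar with ht
    have hfistar : 0 < f istar * g istar := by
      have := histar; simp only [hT, Finset.mem_filter] at this; exact this.2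
    have hfistar' : f istar ≠ 0 := fun h => by simp [h] at hfistar
    have hgistar' : g istar ≠ 0 := fun h => by simp [h] at hfistar
    have htpos : 0 < t := by
      rw [ht, div_pos_iff]
      rcases mul_pos_iff.1 hfistar with ⟨h1, h2⟩ | ⟨h1, h2⟩
      · left; exact ⟨h2, h1⟩
      · right; exact ⟨h2, h1⟩
    set g' : ι → ℝ := g - t • f with hg'
    have hg'W : g' ∈ W := W.sub_mem hg.1 (W.smul_mem t hfW)
    have hg'istar : g' istar = 0 := by
      simp only [hg', ht, Pi.sub_apply, Pi.smul_apply, smul_eq_mul]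
      field_simp
      ring
    have hsupp' : suppF g' ⊆ suppF g := by
      intro i hi
      rw [mem_suppF] at hi ⊢
      intro h0
      have hf0 : f i = 0 := by
        by_contra hfi
        exact (hfg i hfi) h0
      simp [hg', h0, hf0] at hi
    have hmem : istar ∈ suppF g := mem_suppF.2 hgistar'
    have hssg' : suppF g' ⊂ suppF g :=
      (Finset.ssubset_iff_of_subset hsupp').2
        ⟨istar, hmem, fun h => (mem_suppF.1 h) hg'istar⟩
    have hg'ne : g' ≠ 0 := by
      intro h0
      have hgf : g = t • f := by
        have := sub_eq_zero.1 (show g - t • f = 0 from by rw [← hg']; exact h0)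
        exact this
      have : suppF f = suppF g := by
        ext i
        simp only [mem_suppF, hgf, Pi.smul_apply, smul_eq_mul]
        constructor
        · intro hi; exact mul_ne_zero (ne_of_gt htpos) hi
        · intro hi h0; rw [h0] at hi; simp at hi
      exact (this ▸ hssF).2 subset_rfl
    -- Conforms g g'
    have hconf : Conforms g g' := by
      intro i hig'
      by_cases hfi : f i = 0
      · have : g' i = g i := by simp [hg', hfi]
        rw [this]; rw [this] at hig'
        exact mul_self_pos.mpr hig'
      · have hgi : g i ≠ 0 := hfg i hfi
        rcases lt_or_gt_of_ne (mul_ne_zero hfi hgi) with hneg | hpos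
        · -- f i * g i < 0
          have : g i * g' i = g i * g i - t * (f i * g i) := by
            simp only [hg', Pi.sub_apply, Pi.smul_apply, smul_eq_mul]; ring
          rw [this]
          nlinarith [mul_self_pos.mpr hgi]
        · -- f i * g i > 0, i ∈ T
          have hiT : i ∈ T := by simp [hT, hpos]
          have hmi : t ≤ g i / f i := hmin i hiT
          have heq : g i * g' i = (f i * g i) * (g i / f i - t) := by
            simp only [hg', Pi.sub_apply, Pi.smul_apply, smul_eq_mul]
            field_simp
          have hnn : 0 ≤ g i * g' i := by
            rw [heq]
            exact mul_nonneg (le_of_lt hpos) (sub_nonneg.2 hmi)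
          have hne0 : g i * g' i ≠ 0 := mul_ne_zero hgi hig'
          exact lt_of_le_of_ne hnn (Ne.symm hne0)
    -- g' gives smaller support, contradicting minimality
    have hPg' : P g' := ⟨hg'W, hg'ne, conforms_trans hg.2.2.1 hconf,
      hsupp'.trans hg.2.2.2⟩
    have hlt : (suppF g').card < (suppF g).card := Finset.card_lt_card hssg'
    have := Nat.find_min' hex ⟨g', hPg', rfl⟩
    omega
  rintro f hfW hf hss
  have hsub : suppF f ⊆ suppF g := by
    intro i hi
    exact mem_suppF.2 (hss.1 (mem_suppF.1 hi))
  have hne : suppF f ≠ suppF g := by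
    intro h
    apply hss.2
    intro i hi
    exact mem_suppF.1 (h ▸ (mem_suppF.2 hi))
  have hssF : suppF f ⊂ suppF g := ⟨hsub, fun h => hne (le_antisymm hsub h)⟩
  obtain ⟨i₀, hi₀⟩ := Function.ne_iff.1 hf
  have hgi₀ : g i₀ ≠ 0 := mem_suppF.1 (hsub (mem_suppF.2 hi₀))
  rcases lt_or_gt_of_ne (mul_ne_zero hi₀ hgi₀) with hneg | hpos
  · exact key (-f) (W.neg_mem hfW) (neg_ne_zero.2 hf) (suppF_neg f ▸ hssF)
      ⟨i₀, by simp only [Pi.neg_apply]; nlinarith⟩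
  · exact key f hfW hf hssF ⟨i₀, hpos⟩

end Aux2

section Aux3
variable {ι : Type*} [Fintype ι] {W : Submodule ℝ (ι → ℝ)}

lemma elementary_smul {g : ι → ℝ} (hg : IsElementaryVec W g) {α : ℝ} (hα : α ≠ 0) :
    IsElementaryVec W (α • g) := by
  refine ⟨W.smul_mem α hg.1, smul_ne_zero hα hg.2.1, ?_⟩
  intro h hhW hh hss
  apply hg.2.2 h hhW hh
  have : {i | (α • g) i ≠ 0} = {i | g i ≠ 0} := by
    ext i
    simp only [Pi.smul_apply, smul_eq_mul, Set.mem_setOf_eq]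
    constructor
    · intro hi h0; rw [h0] at hi; simp at hi
    · intro hi; exact mul_ne_zero hα hi
  exact this ▸ hss

/-- Conformal circuit decomposition. -/
lemma conformal_decomposition :
    ∀ (N : ℕ) (v : ι → ℝ), v ∈ W → (suppF v).card ≤ N →
      ∃ (k : ℕ) (g : Fin k → ι → ℝ),
        (∀ a, IsElementaryVec W (g a)) ∧ (∀ a, Conforms v (g a)) ∧ ∑ a, g a = v := by
  intro N
  induction N with
  | zero =>
    intro v hvW hcard
    have : v = 0 := eq_zero_of_suppF_empty (Finset.card_eq_zero.1 (Nat.le_zero.1 hcard))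
    exact ⟨0, Fin.elim0, fun a => a.elim0, fun a => a.elim0, by simp [this]⟩
  | succ N ih =>
    intro v hvW hcard
    by_cases hv : v = 0
    · exact ⟨0, Fin.elim0, fun a => a.elim0, fun a => a.elim0, by simp [hv]⟩
    obtain ⟨g, hgel, hgconf, hgsupp⟩ := exists_elementary_conforms hvW hv
    have hgsne : (suppF g).Nonempty := suppF_nonempty hgel.2.1
    obtain ⟨istar, histar, hmin⟩ := (suppF g).exists_min_image (fun i => v i / g i) hgsne
    set α := v istar / g istar with hα
    have hgistar : g istar ≠ 0 := mem_suppF.1 histar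
    have hratio : ∀ i ∈ suppF g, 0 < v i / g i := by
      intro i hi
      have hgi : g i ≠ 0 := mem_suppF.1 hi
      have := hgconf i hgi
      rw [div_pos_iff]
      rcases mul_pos_iff.1 this with ⟨h1, h2⟩ | ⟨h1, h2⟩
      · left; exact ⟨h1, h2⟩
      · right; exact ⟨h1, h2⟩
    have hαpos : 0 < α := hratio istar histar
    set v' : ι → ℝ := v - α • g with hv'
    have hv'W : v' ∈ W := W.sub_mem hvW (W.smul_mem α hgel.1)
    have hv'istar : v' istar = 0 := by
      simp only [hv', hα, Pi.sub_apply, Pi.smul_apply, smul_eq_mul]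
      field_simp
      ring
    have hsupp' : suppF v' ⊆ suppF v := by
      intro i hi
      rw [mem_suppF] at hi ⊢
      intro h0
      have hg0 : g i = 0 := by
        by_contra hgi
        have := hgconf i hgi
        rw [h0] at this; simp at this
      simp [hv', h0, hg0] at hi
    have hvistar : istar ∈ suppF v := hgsupp histar
    have hss : suppF v' ⊂ suppF v :=
      (Finset.ssubset_iff_of_subset hsupp').2
        ⟨istar, hvistar, fun h => (mem_suppF.1 h) hv'istar⟩
    have hcard' : (suppF v').card ≤ N := by
      have := Finset.card_lt_card hss
      omega
    -- Conforms v v'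
    have hconf' : Conforms v v' := by
      intro i hi
      by_cases hgi : g i = 0
      · have : v' i = v i := by simp [hv', hgi]
        rw [this]; rw [this] at hi
        exact mul_self_pos.mpr hi
      · have hiS : i ∈ suppF g := mem_suppF.2 hgi
        have hmi : α ≤ v i / g i := hmin i hiS
        have hvi : v i ≠ 0 := mem_suppF.1 (hgsupp hiS)
        have heq : v i * v' i = (g i * v i) * (v i / g i - α) := by
          simp only [hv', Pi.sub_apply, Pi.smul_apply, smul_eq_mul]
          field_simp
        have hpos : 0 < g i * v i := by
          have := hgconf i hgi; nlinarith
        have hnn : 0 ≤ v i * v' i := by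
          rw [heq]
          exact mul_nonneg (le_of_lt hpos) (sub_nonneg.2 hmi)
        exact lt_of_le_of_ne hnn (Ne.symm (mul_ne_zero hvi hi))
    obtain ⟨k, gs, hels, hconfs, hsum⟩ := ih v' hv'W hcard'
    refine ⟨k + 1, Fin.cons (α • g) gs, ?_, ?_, ?_⟩
    · intro a
      refine Fin.cases ?_ ?_ a
      · exact elementary_smul hgel (ne_of_gt hαpos)
      · intro b; simpa using hels b
    · intro a
      refine Fin.cases ?_ ?_ a
      · intro i hi
        simp only [Fin.cons_zero, Pi.smul_apply, smul_eq_mul] at hi ⊢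
        have hgi : g i ≠ 0 := by
          intro h0; rw [h0] at hi; simp at hi
        have := hgconf i hgi
        nlinarith
      · intro b
        simpa using conforms_trans hconf' (hconfs b)
    · rw [Fin.sum_cons, hsum, hv']
      abel

end Aux3

section Aux5

lemma conf_terms_sum_abs {k : ℕ} {t : Fin k → ℝ} {s : ℝ}
    (hconf : ∀ a, t a ≠ 0 → 0 < s * t a) (hsum : ∑ a, t a = s) (F : Finset (Fin k)) :
    ∑ a ∈ F, |t a| ≤ |s| := by
  rcases le_or_gt 0 s with hs | hs
  · have hnn : ∀ a, 0 ≤ t a := by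
      intro a
      by_contra hlt
      push_neg at hlt
      have := hconf a (ne_of_lt hlt)
      nlinarith
    calc ∑ a ∈ F, |t a| = ∑ a ∈ F, t a := by
          exact Finset.sum_congr rfl fun a _ => abs_of_nonneg (hnn a)
      _ ≤ ∑ a, t a := Finset.sum_le_sum_of_subset_of_nonneg (Finset.subset_univ F)
          (fun a _ _ => hnn a)
      _ = s := hsum
      _ = |s| := (abs_of_nonneg hs).symm
  · have hnp : ∀ a, t a ≤ 0 := by
      intro a
      by_contra hlt
      push_neg at hlt
      have := hconf a (ne_of_gt hlt)
      nlinarith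
    calc ∑ a ∈ F, |t a| = ∑ a ∈ F, -t a := by
          exact Finset.sum_congr rfl fun a _ => abs_of_nonpos (hnp a)
      _ ≤ ∑ a, -t a := Finset.sum_le_sum_of_subset_of_nonneg (Finset.subset_univ F)
          (fun a _ _ => neg_nonneg.2 (hnp a))
      _ = -s := by rw [Finset.sum_neg_distrib, hsum]
      _ = |s| := (abs_of_neg hs).symm

lemma conf_partial_between {k : ℕ} {t : Fin k → ℝ} {s : ℝ}
    (hconf : ∀ a, t a ≠ 0 → 0 < s * t a) (hsum : ∑ a, t a = s) (F : Finset (Fin k)) :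
    (0 ≤ ∑ a ∈ F, t a ∧ ∑ a ∈ F, t a ≤ s) ∨
      (s ≤ ∑ a ∈ F, t a ∧ ∑ a ∈ F, t a ≤ 0) := by
  rcases le_or_gt 0 s with hs | hs
  · left
    have hnn : ∀ a, 0 ≤ t a := by
      intro a
      by_contra hlt
      push_neg at hlt
      have := hconf a (ne_of_lt hlt)
      nlinarith
    constructor
    · exact Finset.sum_nonneg fun a _ => hnn a
    · rw [← hsum]
      exact Finset.sum_le_sum_of_subset_of_nonneg (Finset.subset_univ F)
        (fun a _ _ => hnn a)
  · right
    have hnp : ∀ a, t a ≤ 0 := by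
      intro a
      by_contra hlt
      push_neg at hlt
      have := hconf a (ne_of_gt hlt)
      nlinarith
    constructor
    · rw [← hsum]
      have := Finset.sum_le_sum_of_subset_of_nonneg (Finset.subset_univ F)
        (fun a (_ : a ∈ Finset.univ) (_ : a ∉ F) => neg_nonneg.2 (hnp a)) (f := fun a => -t a)
      simp only [Finset.sum_neg_distrib] at this
      linarith
    · exact Finset.sum_nonpos fun a _ => hnp a

end Aux5

section Aux4
variable {ι : Type*} [Fintype ι] {W : Submodule ℝ (ι → ℝ)}

/-- Two elementary vectors with the same support are proportional. -/
lemma elementary_proportional {g g₀ : ι → ℝ} (hg : IsElementaryVec W g)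
    (hg₀ : IsElementaryVec W g₀) (hsupp : ∀ i, g i ≠ 0 ↔ g₀ i ≠ 0) :
    ∃ lam : ℝ, lam ≠ 0 ∧ g = lam • g₀ := by
  obtain ⟨i₀, hi₀⟩ := Function.ne_iff.1 hg.2.1
  have hg₀i₀ : g₀ i₀ ≠ 0 := (hsupp i₀).1 hi₀
  set lam := g i₀ / g₀ i₀ with hlam
  have hlne : lam ≠ 0 := div_ne_zero hi₀ hg₀i₀
  refine ⟨lam, hlne, ?_⟩
  by_contra hne
  set h : ι → ℝ := g - lam • g₀ with hh
  have hhW : h ∈ W := W.sub_mem hg.1 (W.smul_mem lam hg₀.1)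
  have hhne : h ≠ 0 := fun h0 => hne (sub_eq_zero.1 h0)
  apply hg.2.2 h hhW hhne
  constructor
  · intro i hi
    simp only [Set.mem_setOf_eq] at hi ⊢
    intro h0
    have hg₀0 : g₀ i = 0 := by
      by_contra hgi
      exact ((hsupp i).2 hgi) h0
    simp [hh, h0, hg₀0] at hi
  · intro hsub
    have hi₀mem : i₀ ∈ {i | g i ≠ 0} := hi₀
    have := hsub hi₀mem
    simp only [Set.mem_setOf_eq, hh, Pi.sub_apply, Pi.smul_apply, smul_eq_mul] at this
    apply this
    rw [hlam]
    field_simp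
    ring

lemma kappa_set_bddAbove :
    BddAbove {t : ℝ | ∃ g : ι → ℝ, IsElementaryVec W g ∧
      ∃ i j : ι, g i ≠ 0 ∧ g j ≠ 0 ∧ t = |g j / g i|} := by
  set S := {t : ℝ | ∃ g : ι → ℝ, IsElementaryVec W g ∧
      ∃ i j : ι, g i ≠ 0 ∧ g j ≠ 0 ∧ t = |g j / g i|} with hS
  set rep : Finset ι → (ι → ℝ) := fun s =>
    if h : ∃ g, IsElementaryVec W g ∧ suppF g = s then h.choose else 0 with hrep
  set f : Finset ι × ι × ι → ℝ := fun p => |rep p.1 p.2.2 / rep p.1 p.2.1| with hf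
  have hsub : S ⊆ Set.range f := by
    rintro t ⟨g, hgel, i, j, hgi, hgj, ht⟩
    refine ⟨(suppF g, i, j), ?_⟩
    have hex : ∃ g', IsElementaryVec W g' ∧ suppF g' = suppF g := ⟨g, hgel, rfl⟩
    have hrepspec := hex.choose_spec
    set g₀ := hex.choose with hg₀
    have hsupp : ∀ i, g i ≠ 0 ↔ g₀ i ≠ 0 := by
      intro i
      rw [← mem_suppF, ← mem_suppF, hrepspec.2]
    obtain ⟨lam, hlne, hgeq⟩ := elementary_proportional hgel hrepspec.1 hsupp
    have hval : rep (suppF g) = g₀ := by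
      rw [hrep]; simp only [dif_pos hex]; exact hg₀.symm
    simp only [hf, hval]
    have hg₀i : g₀ i ≠ 0 := (hsupp i).1 hgi
    rw [ht, hgeq]
    simp only [Pi.smul_apply, smul_eq_mul]
    rw [mul_div_mul_left _ _ hlne]
  exact (Set.Finite.subset (Set.finite_range f) hsub).bddAbove

lemma one_le_kappaSub (hbot : W ≠ ⊥) : 1 ≤ kappaSub W := by
  by_cases htop : W = ⊤
  · rw [kappaSub, if_pos (Or.inr htop)]
  rw [kappaSub, if_neg (by tauto)]
  obtain ⟨v, hvW, hv⟩ := Submodule.exists_mem_ne_zero_of_ne_bot hbot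
  obtain ⟨g, hgel, -, -⟩ := exists_elementary_conforms hvW hv
  obtain ⟨i, hi⟩ := Function.ne_iff.1 hgel.2.1
  have hmem : (1 : ℝ) ∈ {t : ℝ | ∃ g : ι → ℝ, IsElementaryVec W g ∧
      ∃ i j : ι, g i ≠ 0 ∧ g j ≠ 0 ∧ t = |g j / g i|} :=
    ⟨g, hgel, i, i, hi, hi, by rw [div_self hi]; simp⟩
  exact le_csSup kappa_set_bddAbove hmem

lemma abs_le_kappa_mul {g : ι → ℝ} (hbot : W ≠ ⊥) (htop : W ≠ ⊤)
    (hg : IsElementaryVec W g) (i j : ι) (hgj : g j ≠ 0) :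
    |g i| ≤ kappaSub W * |g j| := by
  by_cases hgi : g i = 0
  · rw [hgi, abs_zero]
    have h1 : (1:ℝ) ≤ kappaSub W := one_le_kappaSub hbot
    positivity
  · have hmem : |g i / g j| ∈ {t : ℝ | ∃ g : ι → ℝ, IsElementaryVec W g ∧
        ∃ i j : ι, g i ≠ 0 ∧ g j ≠ 0 ∧ t = |g j / g i|} :=
      ⟨g, hg, j, i, hgj, hgi, rfl⟩
    have hle : |g i / g j| ≤ kappaSub W := by
      rw [kappaSub, if_neg (by tauto)]
      exact le_csSup kappa_set_bddAbove hmem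
    calc |g i| = |g i / g j| * |g j| := by
            rw [← abs_mul, div_mul_cancel₀ _ hgj]
      _ ≤ kappaSub W * |g j| := by
            apply mul_le_mul_of_nonneg_right hle (abs_nonneg _)

end Aux4

section Main
variable {m n : ℕ}

lemma mem_XA (A : Matrix (Fin m) (Fin n) ℝ) (w : Fin n → ℝ) (d : Fin m → ℝ) :
    Sum.elim w d ∈ XA A ↔ A.mulVec w = d := by
  rw [XA, LinearMap.mem_ker, Matrix.mulVecLin_apply,
    Matrix.fromCols_mulVec_sumElim, Matrix.neg_mulVec, Matrix.one_mulVec,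
    add_neg_eq_zero]

lemma phi_bddBelow (A : Matrix (Fin m) (Fin n) ℝ) (b : Fin m → ℝ) (c u : Fin n → ℝ) :
    BddBelow {v : ℝ | ∃ x : Fin n → ℝ, A.mulVec x = b ∧ 0 ≤ x ∧ x ≤ u ∧
      v = ∑ i, c i * x i} := by
  refine ⟨-∑ i, |c i| * u i, ?_⟩
  rintro v ⟨x, -, hx0, hxu, rfl⟩
  have key : ∀ i, -( |c i| * u i) ≤ c i * x i := by
    intro i
    have h1 : |c i * x i| ≤ |c i| * u i := by
      rw [abs_mul]
      apply mul_le_mul_of_nonneg_left _ (abs_nonneg _)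
      rw [abs_of_nonneg (hx0 i)]
      exact hxu i
    linarith [neg_abs_le (c i * x i)]
  calc -∑ i, |c i| * u i = ∑ i, -(|c i| * u i) := by rw [Finset.sum_neg_distrib]
    _ ≤ ∑ i, c i * x i := Finset.sum_le_sum fun i _ => key i

lemma phi_one_sided (A : Matrix (Fin m) (Fin n) ℝ)
    (c u : Fin n → ℝ) (hu : 0 ≤ u) (b bbar : Fin m → ℝ)
    (hb : ∃ x : Fin n → ℝ, A.mulVec x = b ∧ 0 ≤ x ∧ x ≤ u)
    (hbbar : ∃ x : Fin n → ℝ, A.mulVec x = bbar ∧ 0 ≤ x ∧ x ≤ u) :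
    PhiLP A b c u ≤ PhiLP A bbar c u +
      kappaSub (XA A) * (∑ i, |c i|) * ∑ j, |b j - bbar j| := by
  by_cases hbb : b = bbar
  · subst hbb
    simp
  obtain ⟨j₀, hj₀⟩ := Function.ne_iff.1 hbb
  obtain ⟨z, hAz, hz0, hzu⟩ := hb
  have htop : XA A ≠ ⊤ := by
    intro h
    have hmem : Sum.elim (0 : Fin n → ℝ) (Pi.single j₀ 1) ∈ XA A := by
      rw [h]; trivial
    rw [mem_XA] at hmem
    have := congrFun hmem j₀
    simp [Matrix.mulVec_zero, Pi.single_eq_same] at this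
  have hbot : XA A ≠ ⊥ := by
    obtain ⟨x₀, hAx₀, -, -⟩ := hbbar
    intro h
    have hmem : Sum.elim (z - x₀) (b - bbar) ∈ XA A := by
      rw [mem_XA, Matrix.mulVec_sub, hAz, hAx₀]
    rw [h, Submodule.mem_bot] at hmem
    have := congrFun hmem (Sum.inr j₀)
    simp only [Sum.elim_inr, Pi.sub_apply, Pi.zero_apply] at this
    exact hj₀ (sub_eq_zero.1 this)
  set κ := kappaSub (XA A) with hκ
  have hκ1 : 1 ≤ κ := one_le_kappaSub hbot
  have hκ0 : 0 ≤ κ := le_trans zero_le_one hκ1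
  refine le_of_forall_pos_lt_add fun ε hε => ?_
  have hne : {v : ℝ | ∃ x : Fin n → ℝ, A.mulVec x = bbar ∧ 0 ≤ x ∧ x ≤ u ∧
      v = ∑ i, c i * x i}.Nonempty := by
    obtain ⟨x₀, h1, h2, h3⟩ := hbbar
    exact ⟨_, x₀, h1, h2, h3, rfl⟩
  obtain ⟨val, ⟨xb, hAxb, hxb0, hxbu, hval⟩, hvlt⟩ := Real.lt_sInf_add_pos hne hε
  set w : Fin n → ℝ := z - xb with hw
  set V : Fin n ⊕ Fin m → ℝ := Sum.elim w (b - bbar) with hV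
  have hVW : V ∈ XA A := by
    rw [hV, mem_XA, hw, Matrix.mulVec_sub, hAz, hAxb]
  obtain ⟨k, g, hel, hconf, hsum⟩ :=
    conformal_decomposition (suppF V).card V hVW le_rfl
  set p : Fin k → Fin n → ℝ := fun a i => g a (Sum.inl i) with hp
  set q : Fin k → Fin m → ℝ := fun a j => g a (Sum.inr j) with hq
  have heta : ∀ a, Sum.elim (p a) (q a) = g a := by
    intro a; funext x; cases x <;> rfl
  have hAq : ∀ a, A.mulVec (p a) = q a := by
    intro a
    rw [← mem_XA A (p a) (q a), heta a]
    exact (hel a).1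
  set F : Finset (Fin k) := Finset.univ.filter (fun a => q a ≠ 0) with hF
  set x' : Fin n → ℝ := fun i => xb i + ∑ a ∈ F, p a i with hx'
  have hconfp : ∀ i : Fin n, ∀ a, p a i ≠ 0 → 0 < w i * p a i := by
    intro i a ha
    exact hconf a (Sum.inl i) ha
  have hsump : ∀ i : Fin n, ∑ a, p a i = w i := by
    intro i
    have := congrFun hsum (Sum.inl i)
    rw [Finset.sum_apply] at this
    exact this
  have hconfq : ∀ j : Fin m, ∀ a, q a j ≠ 0 → 0 < (b j - bbar j) * q a j := by
    intro j a ha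
    have := hconf a (Sum.inr j) ha
    simpa [hV] using this
  have hsumq : ∀ j : Fin m, ∑ a, q a j = b j - bbar j := by
    intro j
    have := congrFun hsum (Sum.inr j)
    rw [Finset.sum_apply] at this
    simpa [hV] using this
  have hAx' : A.mulVec x' = b := by
    have hxeq : x' = xb + ∑ a ∈ F, p a := by
      funext i
      simp only [hx', Pi.add_apply, Finset.sum_apply]
    rw [hxeq, Matrix.mulVec_add, hAxb]
    have hsum2 : A.mulVec (∑ a ∈ F, p a) = ∑ a ∈ F, q a := by
      rw [← Matrix.mulVecLin_apply, map_sum]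
      exact Finset.sum_congr rfl fun a _ => by rw [Matrix.mulVecLin_apply, hAq]
    rw [hsum2, hF, Finset.sum_filter_ne_zero]
    funext j
    simp only [Pi.add_apply, Finset.sum_apply, hsumq j]
    ring
  have hbox0 : 0 ≤ x' := by
    intro i
    have hbet := conf_partial_between (hconfp i) (hsump i) F
    have hwz : xb i + w i = z i := by simp [hw]
    have h0 : (0:ℝ) ≤ z i := hz0 i
    have h1 : (0:ℝ) ≤ xb i := hxb0 i
    simp only [hx', Pi.zero_apply]
    rcases hbet with ⟨h2, h3⟩ | ⟨h2, h3⟩ <;> linarith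
  have hboxu : x' ≤ u := by
    intro i
    have hbet := conf_partial_between (hconfp i) (hsump i) F
    have hwz : xb i + w i = z i := by simp [hw]
    have h0 := hzu i
    have h1 := hxbu i
    simp only [hx']
    rcases hbet with ⟨h2, h3⟩ | ⟨h2, h3⟩ <;> linarith
  -- cost bound
  have hsplit : ∑ i, c i * x' i = val + ∑ a ∈ F, ∑ i, c i * p a i := by
    rw [hval]
    calc ∑ i, c i * x' i
        = ∑ i, (c i * xb i + ∑ a ∈ F, c i * p a i) := by
          apply Finset.sum_congr rfl
          intro i _
          simp only [hx']
          rw [mul_add, Finset.mul_sum]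
      _ = (∑ i, c i * xb i) + ∑ i, ∑ a ∈ F, c i * p a i := Finset.sum_add_distrib
      _ = (∑ i, c i * xb i) + ∑ a ∈ F, ∑ i, c i * p a i := by rw [Finset.sum_comm]
  have hbound : ∀ a ∈ F, ∑ i, c i * p a i ≤ (∑ i, |c i|) * (κ * ∑ j, |q a j|) := by
    intro a haF
    have hqa : q a ≠ 0 := by
      have := haF
      simp only [hF, Finset.mem_filter] at this
      exact this.2
    obtain ⟨ja, hja⟩ := Function.ne_iff.1 hqa
    have hpb : ∀ i, |p a i| ≤ κ * ∑ j, |q a j| := by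
      intro i
      have h1 : |g a (Sum.inl i)| ≤ κ * |g a (Sum.inr ja)| :=
        abs_le_kappa_mul hbot htop (hel a) _ _ hja
      have h2 : |q a ja| ≤ ∑ j, |q a j| :=
        Finset.single_le_sum (f := fun j => |q a j|)
          (fun j _ => abs_nonneg _) (Finset.mem_univ ja)
      calc |p a i| ≤ κ * |q a ja| := h1
        _ ≤ κ * ∑ j, |q a j| := mul_le_mul_of_nonneg_left h2 hκ0
    calc ∑ i, c i * p a i ≤ ∑ i, |c i| * |p a i| := Finset.sum_le_sum fun i _ => by
          rw [← abs_mul]; exact le_abs_self _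
      _ ≤ ∑ i, |c i| * (κ * ∑ j, |q a j|) := Finset.sum_le_sum fun i _ =>
          mul_le_mul_of_nonneg_left (hpb i) (abs_nonneg _)
      _ = (∑ i, |c i|) * (κ * ∑ j, |q a j|) := by rw [← Finset.sum_mul]
  have hqtot : ∑ a ∈ F, ∑ j, |q a j| ≤ ∑ j, |b j - bbar j| := by
    rw [Finset.sum_comm]
    apply Finset.sum_le_sum
    intro j _
    exact conf_terms_sum_abs (hconfq j) (hsumq j) F
  have hcnn : 0 ≤ ∑ i, |c i| := Finset.sum_nonneg fun i _ => abs_nonneg _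
  have hcost : ∑ i, c i * x' i ≤ val + κ * (∑ i, |c i|) * ∑ j, |b j - bbar j| := by
    rw [hsplit]
    have h1 : ∑ a ∈ F, ∑ i, c i * p a i
        ≤ ∑ a ∈ F, (∑ i, |c i|) * (κ * ∑ j, |q a j|) :=
      Finset.sum_le_sum hbound
    have h2 : ∑ a ∈ F, (∑ i, |c i|) * (κ * ∑ j, |q a j|)
        = (∑ i, |c i|) * κ * ∑ a ∈ F, ∑ j, |q a j| := by
      rw [Finset.mul_sum]
      apply Finset.sum_congr rfl
      intro a _
      ring
    have h3 : (∑ i, |c i|) * κ * ∑ a ∈ F, ∑ j, |q a j|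
        ≤ (∑ i, |c i|) * κ * ∑ j, |b j - bbar j| :=
      mul_le_mul_of_nonneg_left hqtot (by positivity)
    nlinarith [h1, h2 ▸ h1]
  have hPhib : PhiLP A b c u ≤ ∑ i, c i * x' i :=
    csInf_le (phi_bddBelow A b c u) ⟨x', hAx', hbox0, hboxu, rfl⟩
  have hfin : PhiLP A b c u ≤ val + κ * (∑ i, |c i|) * ∑ j, |b j - bbar j| :=
    le_trans hPhib hcost
  calc PhiLP A b c u ≤ val + κ * (∑ i, |c i|) * ∑ j, |b j - bbar j| := hfin
    _ < (PhiLP A bbar c u + ε) + κ * (∑ i, |c i|) * ∑ j, |b j - bbar j| := by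
        rw [PhiLP] at *
        linarith
    _ = PhiLP A bbar c u + κ * (∑ i, |c i|) * (∑ j, |b j - bbar j|) + ε := by ring

end Main


/-- If both `LP(A,b,c,u)` and `LP(A,b̄,c,u)` are feasible, then
`|Φ(A,b,c,u) − Φ(A,b̄,c,u)| ≤ κ(X_A)·‖c‖₁·‖b − b̄‖₁`. -/
theorem optimal_value_rhs_proximity {m n : ℕ} (A : Matrix (Fin m) (Fin n) ℝ)
    (c u : Fin n → ℝ) (hu : 0 ≤ u) (b bbar : Fin m → ℝ)
    (hb : ∃ x : Fin n → ℝ, A.mulVec x = b ∧ 0 ≤ x ∧ x ≤ u)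
    (hbbar : ∃ x : Fin n → ℝ, A.mulVec x = bbar ∧ 0 ≤ x ∧ x ≤ u) :
    |PhiLP A b c u - PhiLP A bbar c u| ≤
      kappaSub (XA A) * (∑ i, |c i|) * ∑ j, |b j - bbar j| := by
  rw [abs_sub_le_iff]
  constructor
  · have h := phi_one_sided A c u hu b bbar hb hbbar
    linarith
  · have h := phi_one_sided A c u hu bbar b hbbar hb
    have hsw : ∑ j, |bbar j - b j| = ∑ j, |b j - bbar j| :=
      Finset.sum_congr rfl fun j _ => abs_sub_comm _ _
    rw [hsw] at h
    linarith
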